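/- arXiv:1910.12320 — 2 statements merged into one kernel-verified Lean document; each statement's English description precedes it below -/
import Mathlib

section
/- Let K be a separated topological field (a topological division ring that is Hausdorff, with inversion continuous away from 0) in which the image under x ↦ x⁻¹ of every Cauchy filter on K \ {0} which does not have 0 as a cluster point is again a Cauchy filter. Then the separated completion K̂, with its ring structure and with inversion defined by extending x ↦ x⁻¹ by continuity on nonzero elements and setting 0⁻¹ = 0, is a topological field: every nonzero element of K̂ is invertible and inversion is continuous at every nonzero point of K̂. -/
open UniformSpace UniformSpace.Completion Filter Topology
open scoped Uniformity

/-- Completion of a completable topological field: if `K` is a separated topological field in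
which the image under `x ↦ x⁻¹` of every Cauchy filter without `0` as a cluster point is a
Cauchy filter, then the completion of `K` (with inversion extended by continuity and
`0⁻¹ = 0`) is a topological field: every nonzero element is invertible (with `x * x⁻¹ = 1`
and `0⁻¹ = 0`), and inversion is continuous at every nonzero point. -/
theorem completion_of_completableTopField_is_topological_field
    {K : Type*} [Field K] [UniformSpace K] [IsTopologicalDivisionRing K] [IsUniformAddGroup K]
    (hK : 𝓤 K = Filter.comap (fun p : K × K => p.1 - p.2) (𝓝 0))
    [T0Space K]
    (nice : ∀ F : Filter K, Cauchy F → 𝓝 (0 : K) ⊓ F = ⊥ →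
      Cauchy (Filter.map (fun x : K => x⁻¹) F)) :
    ((0 : Completion K)⁻¹ = 0) ∧
    (∀ x : Completion K, x ≠ 0 → x * x⁻¹ = 1) ∧
    (∀ x : Completion K, x ≠ 0 →
      ContinuousAt (fun y : Completion K => y⁻¹) x) := by
  haveI : CompletableTopField K := ⟨nice⟩
  exact ⟨inv_zero, fun x hx => mul_inv_cancel₀ hx, fun x hx => continuousAt_inv₀ hx⟩
end

section
/- Let A be a topological commutative ring admitting an open subring A₀ whose induced topology is the I-adic topology for some finitely generated ideal I of A₀ (i.e. A is a Huber ring). Let T be a subset of A such that the ideal of A generated by T is open. Then for every open additive subgroup U of A, the set T·U — the additive subgroup of A generated by all products t·u with t ∈ T and u in the ℤ-span of U — is open in A. -/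
open Topology

/-- In a Huber ring `A` (a topological ring with an open subring whose induced topology is
`I`-adic for a finitely generated ideal `I`), if `T ⊆ A` generates an open ideal, then for
every open additive subgroup `U` of `A` the additive subgroup `T·U` generated by the
products `t * u` (`t ∈ T`, `u ∈ U`) is open. -/
theorem huber_ring_smul_open_addSubgroup
    {A : Type*} [CommRing A] [TopologicalSpace A] [IsTopologicalRing A]
    (hA : ∃ A₀ : Subring A, IsOpen (A₀ : Set A) ∧
      ∃ I : Ideal A₀, I.FG ∧ IsAdic I)
    {T : Set A} (hT : IsOpen ((Ideal.span T : Ideal A) : Set A))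
    (U : OpenAddSubgroup A) :
    IsOpen ((AddSubgroup.closure (Set.image2 (· * ·) T (U : Set A)) : AddSubgroup A) :
      Set A) := by
  obtain ⟨A₀, hA₀, I, hIfg, hadic⟩ := hA
  set S : AddSubgroup A := AddSubgroup.closure (Set.image2 (· * ·) T (U : Set A)) with hSdef
  have hSgen : ∀ t ∈ T, ∀ u ∈ (U : Set A), t * u ∈ S := fun t ht u hu =>
    AddSubgroup.subset_closure (Set.mem_image2_of_mem ht hu)
  rw [isAdic_iff] at hadic
  obtain ⟨hIopen, hIbasis⟩ := hadic
  have hcont : Continuous ((↑) : A₀ → A) := continuous_subtype_val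
  -- find n with I^n ⊆ span T (as subsets of A)
  have h1 : ((↑) : A₀ → A) ⁻¹' (Ideal.span T : Set A) ∈ 𝓝 (0 : A₀) := by
    refine hcont.continuousAt.preimage_mem_nhds ?_
    rw [show ((0:A₀):A) = 0 by simp]
    exact hT.mem_nhds (Submodule.zero_mem _)
  obtain ⟨n, hn⟩ := hIbasis _ h1
  obtain ⟨G, hG⟩ := Submodule.FG.pow hIfg n
  -- coefficients : each generator g of I^n lies in span T
  have hmem : ∀ g : G, ∃ c : A →₀ A, ↑c.support ⊆ T ∧ (c.sum fun t a => a • t) = ((g : A₀) : A) := by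
    intro g
    have hg : ((g : A₀) : A) ∈ Ideal.span T := by
      apply hn
      exact hG ▸ Submodule.subset_span g.2
    exact Submodule.mem_span_set.mp hg
  choose c hc1 hc2 using hmem
  -- find s such that for all coefficients a and x ∈ I^s, a * x ∈ U
  have hU0 : (U : Set A) ∈ 𝓝 (0 : A) := U.isOpen.mem_nhds U.zero_mem
  have h2 : ∀ᶠ x : A₀ in 𝓝 0, ∀ g : G, ∀ t ∈ (c g).support, (c g t) * ↑x ∈ U := by
    rw [Filter.eventually_all]
    intro g
    rw [Filter.eventually_all_finset]
    intro t _
    have hcm : Continuous fun x : A₀ => (c g t) * (x : A) := continuous_const.mul hcont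
    exact hcm.continuousAt.preimage_mem_nhds (by simpa using hU0)
  obtain ⟨s, hs⟩ := hIbasis _ h2
  -- key containment : I^(n+s) ⊆ S
  have key : ∀ z ∈ (I ^ (n + s) : Ideal A₀), ((z : A₀) : A) ∈ S := by
    intro z hz
    rw [pow_add] at hz
    refine Submodule.mul_induction_on hz ?_ ?_
    · intro y hy h hh
      rw [← hG] at hy
      induction hy using Submodule.span_induction generalizing h with
      | mem g hg =>
        have hgy : ((g * h : A₀) : A) = (c ⟨g, hg⟩).sum fun t a => t * (a * (h : A)) := by
          push_cast
          rw [← hc2 ⟨g, hg⟩, Finsupp.sum_mul]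
          exact Finsupp.sum_congr fun t _ => by rw [smul_eq_mul]; ring
        rw [hgy]
        refine AddSubgroup.sum_mem _ fun t ht => ?_
        exact hSgen t (hc1 ⟨g, hg⟩ ht) _ (hs hh ⟨g, hg⟩ t ht)
      | zero => simpa using S.zero_mem
      | add y₁ y₂ _ _ ih₁ ih₂ =>
        have : ((y₁ + y₂) * h : A₀) = y₁ * h + y₂ * h := by ring
        rw [this]
        push_cast
        exact S.add_mem (ih₁ h hh) (ih₂ h hh)
      | smul d y _ ih =>
        have : ((d • y) * h : A₀) = y * (d * h) := by rw [smul_eq_mul]; ring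
        rw [this]
        exact ih (d * h) (Ideal.mul_mem_left _ _ hh)
    · intro x y hx hy
      push_cast
      exact S.add_mem hx hy
  -- conclude
  have hopenim : IsOpen (((↑) : A₀ → A) '' ((I ^ (n + s) : Ideal A₀) : Set A₀)) :=
    hA₀.isOpenMap_subtype_val _ (hIopen (n + s))
  refine AddSubgroup.isOpen_of_mem_nhds S (g := 0) ?_
  refine Filter.mem_of_superset (hopenim.mem_nhds ⟨0, Submodule.zero_mem _, by simp⟩) ?_
  rintro _ ⟨z, hz, rfl⟩
  exact key z hz
end
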